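/- arXiv:2407.11328 — 2 statements merged into one kernel-verified Lean document; each statement's English description precedes it below -/
import Mathlib

section
/- Let X and Y be finite simple graphs on the same number of vertices with X connected. If X and Y are degree similar, then their complements X̄ and Ȳ are degree similar. -/
open Matrix

open Classical in
noncomputable def adjMat {V : Type*} (G : SimpleGraph V) : Matrix V V ℝ :=
  Matrix.of fun a b => if G.Adj a b then 1 else 0

noncomputable def gdeg {V : Type*} (G : SimpleGraph V) (v : V) : ℕ :=
  Nat.card (G.neighborSet v)

noncomputable def degMat {V : Type*} [DecidableEq V] (G : SimpleGraph V) : Matrix V V ℝ :=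
  Matrix.diagonal fun v => (gdeg G v : ℝ)

/-- Two graphs (on possibly different vertex types of the same cardinality) are
degree similar if there is an invertible real matrix conjugating the adjacency
matrix of the first to that of the second, and likewise for the degree matrices. -/
def DegreeSimilar {V W : Type*} [Fintype V] [Fintype W] [DecidableEq V] [DecidableEq W]
    (G : SimpleGraph V) (H : SimpleGraph W) : Prop :=
  ∃ (e : V ≃ W) (M : Matrix V V ℝ), IsUnit M ∧
    M⁻¹ * adjMat G * M = (adjMat H).submatrix ⇑e ⇑e ∧
    M⁻¹ * degMat G * M = (degMat H).submatrix ⇑e ⇑e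

lemma adjMat_eq {V : Type*} (G : SimpleGraph V) [DecidableRel G.Adj] :
    adjMat G = G.adjMatrix ℝ := by
  ext i j
  simp only [adjMat, SimpleGraph.adjMatrix, Matrix.of_apply]
  split_ifs <;> rfl

lemma gdeg_eq {V : Type*} [Fintype V] (G : SimpleGraph V) [DecidableRel G.Adj] (v : V) :
    gdeg G v = G.degree v := by
  rw [gdeg, Nat.card_eq_fintype_card, SimpleGraph.card_neighborSet_eq_degree]

lemma degMat_eq {V : Type*} [Fintype V] [DecidableEq V] (G : SimpleGraph V)
    [DecidableRel G.Adj] : degMat G = G.degMatrix ℝ := by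
  ext i j
  simp [degMat, SimpleGraph.degMatrix, Matrix.diagonal, gdeg_eq]

/-- the all ones matrix -/
noncomputable def Jmat (V : Type*) : Matrix V V ℝ := Matrix.of fun _ _ => 1

lemma adjMat_compl {V : Type*} [Fintype V] [DecidableEq V] (G : SimpleGraph V) :
    adjMat Gᶜ = Jmat V - 1 - adjMat G := by
  ext i j
  by_cases hij : i = j
  · subst hij; simp [adjMat, Jmat]
  · simp only [adjMat, Jmat, Matrix.sub_apply, Matrix.of_apply, Matrix.one_apply_ne hij,
      SimpleGraph.compl_adj]
    by_cases h : G.Adj i j <;> simp [h, hij]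

lemma degMat_compl {V : Type*} [Fintype V] [DecidableEq V] (G : SimpleGraph V) :
    degMat Gᶜ = ((Fintype.card V : ℝ) - 1) • 1 - degMat G := by
  classical
  ext i j
  by_cases hij : i = j
  · subst hij
    simp only [degMat, Matrix.diagonal_apply_eq, Matrix.sub_apply, Matrix.smul_apply,
      Matrix.one_apply_eq, smul_eq_mul, mul_one]
    rw [gdeg_eq, gdeg_eq, SimpleGraph.degree_compl]
    have h1 : G.degree i < Fintype.card V := G.degree_lt_card_verts i
    have h2 : 1 ≤ Fintype.card V := Nat.one_le_of_lt h1
    push_cast [Nat.cast_sub (Nat.le_sub_one_of_lt h1), Nat.cast_sub h2]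
    ring
  · simp [degMat, Matrix.diagonal_apply_ne _ hij, Matrix.one_apply_ne hij]

/-- If `X` is connected and `X`, `Y` are degree similar, then their complements are
degree similar. -/
theorem degreeSimilar_compl {V : Type*} [Fintype V] [DecidableEq V]
    (X Y : SimpleGraph V) (hX : X.Connected) (h : DegreeSimilar X Y) :
    DegreeSimilar Xᶜ Yᶜ := by
  classical
  obtain ⟨e, M, hM, hA, hD⟩ := h
  haveI : Nonempty V := hX.nonempty
  have hMd : IsUnit M.det := (Matrix.isUnit_iff_isUnit_det M).mp hM
  haveI : Invertible M := M.invertibleOfIsUnitDet hMd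
  -- the Laplacian conjugation
  have hL : M⁻¹ * X.lapMatrix ℝ * M = (Y.lapMatrix ℝ).submatrix ⇑e ⇑e := by
    have h1 : M⁻¹ * (degMat X - adjMat X) * M
        = (degMat Y).submatrix ⇑e ⇑e - (adjMat Y).submatrix ⇑e ⇑e := by
      rw [Matrix.mul_sub, Matrix.sub_mul, hA, hD]
    simpa [SimpleGraph.lapMatrix, ← degMat_eq, ← adjMat_eq, Matrix.submatrix_sub] using h1
  have hLM : X.lapMatrix ℝ * M = M * (Y.lapMatrix ℝ).submatrix ⇑e ⇑e := by
    rw [← hL, ← Matrix.mul_assoc, ← Matrix.mul_assoc, Matrix.mul_nonsing_inv _ hMd,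
      Matrix.one_mul]
  -- row sums of the submatrix Laplacian vanish
  have hP0 : (Y.lapMatrix ℝ).submatrix ⇑e ⇑e *ᵥ (fun _ => 1) = 0 := by
    funext i
    have h2 := congrFun (Y.lapMatrix_mulVec_const_eq_zero (R := ℝ)) (e i)
    simp only [Matrix.mulVec, dotProduct, mul_one, Pi.zero_apply,
      Matrix.submatrix_apply] at h2 ⊢
    rw [Equiv.sum_comp e (fun w => Y.lapMatrix ℝ (e i) w)]
    exact h2
  -- constant vectors from the kernel
  have hker : ∀ x : V → ℝ, X.lapMatrix ℝ *ᵥ x = 0 → ∀ i j, x i = x j := by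
    intro x hx i j
    have := (X.lapMatrix_mulVec_eq_zero_iff_forall_reachable (x := x)).mp
      hx
    exact this i j (hX.preconnected i j)
  -- row sums of M are constant
  have hrow : ∀ i j, (M *ᵥ fun _ => 1) i = (M *ᵥ fun _ => 1) j := by
    apply hker
    rw [Matrix.mulVec_mulVec, hLM, ← Matrix.mulVec_mulVec, hP0, Matrix.mulVec_zero]
  -- column sums: transpose argument
  have hLt : X.lapMatrix ℝ * (Mᵀ)⁻¹ = (Mᵀ)⁻¹ * (Y.lapMatrix ℝ).submatrix ⇑e ⇑e := by
    have := congrArg Matrix.transpose hLM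
    rw [Matrix.transpose_mul, Matrix.transpose_mul, (X.isSymm_lapMatrix ℝ).eq,
      Matrix.transpose_submatrix, (Y.isSymm_lapMatrix ℝ).eq] at this
    have hMtd : IsUnit Mᵀ.det := by rwa [Matrix.det_transpose]
    have h3 : Mᵀ⁻¹ * (Mᵀ * X.lapMatrix ℝ) * Mᵀ⁻¹
        = Mᵀ⁻¹ * ((Y.lapMatrix ℝ).submatrix ⇑e ⇑e * Mᵀ) * Mᵀ⁻¹ := by rw [this]
    rwa [Matrix.nonsing_inv_mul_cancel_left _ _ hMtd, ← Matrix.mul_assoc Mᵀ⁻¹,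
      Matrix.mul_nonsing_inv_cancel_right _ _ hMtd] at h3
  have hMtd : IsUnit Mᵀ.det := by rwa [Matrix.det_transpose]
  have hcol0 : ∀ i j, ((Mᵀ)⁻¹ *ᵥ fun _ => 1) i = ((Mᵀ)⁻¹ *ᵥ fun _ => 1) j := by
    apply hker
    rw [Matrix.mulVec_mulVec, hLt, ← Matrix.mulVec_mulVec, hP0, Matrix.mulVec_zero]
  -- key: J commutes appropriately
  obtain ⟨v0⟩ := ‹Nonempty V›
  set c : ℝ := (M *ᵥ fun _ => 1) v0 with hc
  set d : ℝ := ((Mᵀ)⁻¹ *ᵥ fun _ => 1) v0 with hd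
  have hMt1 : Mᵀ *ᵥ ((Mᵀ)⁻¹ *ᵥ fun _ => 1) = fun _ => (1 : ℝ) := by
    rw [Matrix.mulVec_mulVec, Matrix.mul_nonsing_inv _ hMtd, Matrix.one_mulVec]
  have hdne : d ≠ 0 := by
    intro h0
    have : ((Mᵀ)⁻¹ *ᵥ fun _ => 1) = 0 := by
      funext j; rw [hcol0 j v0, ← hd, h0]; rfl
    rw [this, Matrix.mulVec_zero] at hMt1
    exact one_ne_zero (congrFun hMt1 v0).symm
  have hMt : ∀ j, (Mᵀ *ᵥ fun _ => 1) j = 1 / d := by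
    intro j
    have h1 : ((Mᵀ)⁻¹ *ᵥ fun _ => 1) = fun _ => d := by
      funext k; rw [hcol0 k v0]
    have h6 : (Mᵀ *ᵥ fun _ => d) j = 1 := by rw [← h1]; exact congrFun hMt1 j
    have h7 : (Mᵀ *ᵥ fun _ => d) j = d * (Mᵀ *ᵥ fun _ => 1) j := by
      simp [Matrix.mulVec, dotProduct, Finset.mul_sum, Finset.sum_mul, mul_comm]
    have h8 : d * (Mᵀ *ᵥ fun _ => 1) j = 1 := by rw [← h7]; exact h6
    rw [eq_div_iff hdne]
    linear_combination h8
  -- total sum gives c = 1/d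
  have hsum : (Fintype.card V : ℝ) * c = (Fintype.card V : ℝ) * (1 / d) := by
    have h1 : ∑ i, (M *ᵥ fun _ => 1) i = (Fintype.card V : ℝ) * c := by
      rw [Finset.sum_congr rfl (fun i _ => hrow i v0)]
      simp [mul_comm, hc, Finset.card_univ]
    have h2 : ∑ j, (Mᵀ *ᵥ fun _ => 1) j = (Fintype.card V : ℝ) * (1 / d) := by
      rw [Finset.sum_congr rfl (fun j _ => hMt j)]
      simp [Finset.card_univ]
    have h3 : ∑ i, (M *ᵥ fun _ => 1) i = ∑ j, (Mᵀ *ᵥ fun _ => 1) j := by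
      simp only [Matrix.mulVec, dotProduct, mul_one, Matrix.transpose_apply]
      rw [Finset.sum_comm]
    rw [← h1, h3, h2]
  have hcd : c = 1 / d := by
    have hn : (Fintype.card V : ℝ) ≠ 0 := by
      exact_mod_cast Fintype.card_ne_zero
    exact mul_left_cancel₀ hn hsum
  -- J commutes with M (up to scalar equality on both sides)
  have hJM : Jmat V * M = M * Jmat V := by
    ext i j
    simp only [Jmat, Matrix.mul_apply, Matrix.of_apply, one_mul, mul_one]
    have h1 : ∑ k, M k j = (Mᵀ *ᵥ fun _ => 1) j := by
      simp [Matrix.mulVec, dotProduct]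
    have h2 : ∑ k, M i k = (M *ᵥ fun _ => 1) i := by
      simp [Matrix.mulVec, dotProduct]
    rw [h1, h2, hMt j, hrow i v0, ← hc, hcd]
  have hJ : M⁻¹ * Jmat V * M = Jmat V := by
    rw [Matrix.mul_assoc, hJM, ← Matrix.mul_assoc, Matrix.nonsing_inv_mul _ hMd, Matrix.one_mul]
  have hI : M⁻¹ * (1 : Matrix V V ℝ) * M = 1 := by
    rw [Matrix.mul_one, Matrix.nonsing_inv_mul _ hMd]
  -- submatrix facts
  have hsubA : (adjMat Yᶜ).submatrix ⇑e ⇑e = Jmat V - 1 - (adjMat Y).submatrix ⇑e ⇑e := by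
    rw [adjMat_compl]
    ext i j
    simp [Jmat, Matrix.one_apply, Equiv.apply_eq_iff_eq]
  have hsubD : (degMat Yᶜ).submatrix ⇑e ⇑e
      = ((Fintype.card V : ℝ) - 1) • 1 - (degMat Y).submatrix ⇑e ⇑e := by
    rw [degMat_compl]
    ext i j
    simp [Matrix.one_apply, Equiv.apply_eq_iff_eq]
  refine ⟨e, M, hM, ?_, ?_⟩
  · rw [adjMat_compl, hsubA, Matrix.mul_sub, Matrix.mul_sub, Matrix.sub_mul, Matrix.sub_mul,
      hJ, hI, hA]
  · rw [degMat_compl, hsubD, Matrix.mul_sub, Matrix.sub_mul, Matrix.mul_smul, Matrix.smul_mul,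
      hI, hD]
end

section
/- Let X and Y be connected finite simple graphs that are degree similar, and assume X is regular (all vertices of X have the same degree). Then for any finite simple graph H, the joins X ∨ H and Y ∨ H are degree similar. -/
open Matrix

/-- The join of two graphs: the disjoint union together with all edges between them. -/
def joinG {V W : Type*} (G : SimpleGraph V) (H : SimpleGraph W) :
    SimpleGraph (V ⊕ W) :=
  SimpleGraph.fromRel fun a b =>
    match a, b with
    | Sum.inl a, Sum.inl b => G.Adj a b
    | Sum.inr a, Sum.inr b => H.Adj a b
    | _, _ => True

section Helpers

variable {V W : Type*}

lemma adjMat_symmetric (G : SimpleGraph V) (a b : V) : adjMat G a b = adjMat G b a := by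
  classical
  simp only [adjMat, Matrix.of_apply]
  exact if_congr (G.adj_comm a b) rfl rfl

lemma gdeg_eq_degree [Fintype V] (G : SimpleGraph V) [DecidableRel G.Adj] (v : V) :
    gdeg G v = G.degree v := by
  rw [gdeg, Nat.card_eq_fintype_card, SimpleGraph.card_neighborSet_eq_degree]

lemma rowsum_adj [Fintype V] (G : SimpleGraph V) (a : V) :
    ∑ b, adjMat G a b = (gdeg G a : ℝ) := by
  classical
  rw [gdeg_eq_degree, SimpleGraph.degree, SimpleGraph.neighborFinset_eq_filter]
  simp [adjMat]

/-- In a connected `r`-regular graph, any eigenvector of the adjacency matrix with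
eigenvalue `r` is constant. -/
lemma eig_const [Fintype V] (G : SimpleGraph V) (hG : G.Connected) (r : ℕ)
    (hreg : ∀ v, gdeg G v = r) (f : V → ℝ)
    (hf : (adjMat G).mulVec f = (r : ℝ) • f) : ∀ u v, f u = f v := by
  classical
  have hne : Nonempty V := hG.nonempty
  obtain ⟨v₀, -, hmax⟩ := Finset.exists_max_image Finset.univ f
    ⟨Classical.arbitrary V, Finset.mem_univ _⟩
  have key : ∀ v, f v = f v₀ → ∀ u, G.Adj v u → f u = f v₀ := by
    intro v hv u hadj
    have h1 : ∑ b ∈ G.neighborFinset v, f b = (r : ℝ) * f v₀ := by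
      have h2 := congrFun hf v
      simp only [Matrix.mulVec, dotProduct, Pi.smul_apply, smul_eq_mul] at h2
      calc ∑ b ∈ G.neighborFinset v, f b
          = ∑ b, adjMat G v b * f b := by
            rw [SimpleGraph.neighborFinset_eq_filter, Finset.sum_filter]
            refine Finset.sum_congr rfl fun b _ => ?_
            by_cases hb : G.Adj v b <;> simp [adjMat, hb]
        _ = (r : ℝ) * f v := h2
        _ = (r : ℝ) * f v₀ := by rw [hv]
    have h3 : ∑ b ∈ G.neighborFinset v, f v₀ = (r : ℝ) * f v₀ := by
      rw [Finset.sum_const, SimpleGraph.card_neighborFinset_eq_degree,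
        ← gdeg_eq_degree, hreg v, nsmul_eq_mul]
    have h4 : ∀ b ∈ G.neighborFinset v, f b = f v₀ :=
      (Finset.sum_eq_sum_iff_of_le (fun b _ => hmax b (Finset.mem_univ b))).mp
        (h1.trans h3.symm)
    exact h4 u (by simpa [SimpleGraph.mem_neighborFinset] using hadj)
  have aux : ∀ {a b : V} (_ : G.Walk a b), f a = f v₀ → f b = f v₀ := by
    intro a b w
    induction w with
    | nil => exact id
    | cons h p ih => exact fun ha => ih (key _ ha _ h)
  have main : ∀ v, f v = f v₀ := fun v => aux ((hG.preconnected v₀ v).some) rfl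
  intro u v; rw [main u, main v]

lemma joinG_adj_ll (G : SimpleGraph V) (H : SimpleGraph W) (a b : V) :
    (joinG G H).Adj (Sum.inl a) (Sum.inl b) ↔ G.Adj a b := by
  constructor
  · rintro ⟨hne, h | h⟩
    · exact h
    · exact h.symm
  · intro h
    exact ⟨by simpa using h.ne, Or.inl h⟩

lemma joinG_adj_rr (G : SimpleGraph V) (H : SimpleGraph W) (a b : W) :
    (joinG G H).Adj (Sum.inr a) (Sum.inr b) ↔ H.Adj a b := by
  constructor
  · rintro ⟨hne, h | h⟩
    · exact h
    · exact h.symm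
  · intro h
    exact ⟨by simpa using h.ne, Or.inl h⟩

lemma joinG_adj_lr (G : SimpleGraph V) (H : SimpleGraph W) (a : V) (b : W) :
    (joinG G H).Adj (Sum.inl a) (Sum.inr b) := by
  exact ⟨by simp, Or.inl trivial⟩

lemma joinG_adj_rl (G : SimpleGraph V) (H : SimpleGraph W) (a : W) (b : V) :
    (joinG G H).Adj (Sum.inr a) (Sum.inl b) := by
  exact ⟨by simp, Or.inl trivial⟩

lemma adjMat_join (G : SimpleGraph V) (H : SimpleGraph W) :
    adjMat (joinG G H) = Matrix.fromBlocks (adjMat G) (Matrix.of fun _ _ => (1 : ℝ))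
      (Matrix.of fun _ _ => (1 : ℝ)) (adjMat H) := by
  classical
  ext a b
  rcases a with a | a <;> rcases b with b | b <;>
    simp only [adjMat, Matrix.of_apply, Matrix.fromBlocks_apply₁₁, Matrix.fromBlocks_apply₁₂,
      Matrix.fromBlocks_apply₂₁, Matrix.fromBlocks_apply₂₂]
  · exact if_congr (joinG_adj_ll G H a b) rfl rfl
  · simp [joinG_adj_lr]
  · simp [joinG_adj_rl]
  · exact if_congr (joinG_adj_rr G H a b) rfl rfl

lemma neighborSet_join_inl (G : SimpleGraph V) (H : SimpleGraph W) (v : V) :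
    (joinG G H).neighborSet (Sum.inl v) =
      Sum.inl '' G.neighborSet v ∪ Set.range Sum.inr := by
  ext u
  rcases u with u | u <;>
    simp [SimpleGraph.mem_neighborSet, joinG_adj_ll, joinG_adj_lr]

lemma neighborSet_join_inr (G : SimpleGraph V) (H : SimpleGraph W) (w : W) :
    (joinG G H).neighborSet (Sum.inr w) =
      Sum.inr '' H.neighborSet w ∪ Set.range Sum.inl := by
  ext u
  rcases u with u | u <;>
    simp [SimpleGraph.mem_neighborSet, joinG_adj_rr, joinG_adj_rl]

lemma gdeg_join_inl [Fintype V] [Fintype W] (G : SimpleGraph V) (H : SimpleGraph W) (v : V) :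
    gdeg (joinG G H) (Sum.inl v) = gdeg G v + Fintype.card W := by
  classical
  have h1 : (Set.range (Sum.inr : W → V ⊕ W)).ncard = Fintype.card W := by
    rw [← Set.image_univ, Set.ncard_image_of_injective _ Sum.inr_injective,
      Set.ncard_univ, Nat.card_eq_fintype_card]
  rw [gdeg, Nat.card_coe_set_eq, neighborSet_join_inl,
    Set.ncard_union_eq (by simp [Set.disjoint_left]) (Set.toFinite _) (Set.toFinite _),
    Set.ncard_image_of_injective _ Sum.inl_injective, h1, gdeg, Nat.card_coe_set_eq]

lemma gdeg_join_inr [Fintype V] [Fintype W] (G : SimpleGraph V) (H : SimpleGraph W) (w : W) :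
    gdeg (joinG G H) (Sum.inr w) = gdeg H w + Fintype.card V := by
  classical
  have h1 : (Set.range (Sum.inl : V → V ⊕ W)).ncard = Fintype.card V := by
    rw [← Set.image_univ, Set.ncard_image_of_injective _ Sum.inl_injective,
      Set.ncard_univ, Nat.card_eq_fintype_card]
  rw [gdeg, Nat.card_coe_set_eq, neighborSet_join_inr,
    Set.ncard_union_eq (by simp [Set.disjoint_left]) (Set.toFinite _) (Set.toFinite _),
    Set.ncard_image_of_injective _ Sum.inr_injective, h1, gdeg, Nat.card_coe_set_eq]

lemma degMat_join [Fintype V] [Fintype W] [DecidableEq V] [DecidableEq W]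
    (G : SimpleGraph V) (H : SimpleGraph W) :
    degMat (joinG G H) = Matrix.fromBlocks
      (degMat G + (Fintype.card W : ℝ) • 1) 0 0
      (degMat H + (Fintype.card V : ℝ) • 1) := by
  ext a b
  rcases a with a | a <;> rcases b with b | b <;>
    simp only [degMat, Matrix.fromBlocks_apply₁₁, Matrix.fromBlocks_apply₁₂,
      Matrix.fromBlocks_apply₂₁, Matrix.fromBlocks_apply₂₂, Matrix.add_apply,
      Matrix.smul_apply, Matrix.one_apply, Matrix.diagonal_apply, Matrix.zero_apply,
      smul_eq_mul]
  · rcases eq_or_ne a b with rfl | hab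
    · simp only [if_pos rfl, gdeg_join_inl]
      push_cast
      ring
    · simp [hab]
  · simp
  · simp
  · rcases eq_or_ne a b with rfl | hab
    · simp only [if_pos rfl, gdeg_join_inr]
      push_cast
      ring
    · simp [hab]

lemma fromBlocks_submatrix_summap {V' : Type*} {α : Type*} (e : V ≃ V')
    (A : Matrix V' V' α) (B : Matrix V' W α) (C : Matrix W V' α) (D : Matrix W W α) :
    (Matrix.fromBlocks A B C D).submatrix (Sum.map ⇑e id) (Sum.map ⇑e id) =
      Matrix.fromBlocks (A.submatrix ⇑e ⇑e) (B.submatrix ⇑e _root_.id)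
        (C.submatrix _root_.id ⇑e) D := by
  ext a b
  rcases a with a | a <;> rcases b with b | b <;> rfl

end Helpers

/-- If `X` and `Y` are connected degree-similar graphs and `X` is regular,
then for any graph `H` the joins `X ∨ H` and `Y ∨ H` are degree similar. -/
theorem degreeSimilar_join {V W : Type*} [Fintype V] [Fintype W]
    [DecidableEq V] [DecidableEq W]
    (X Y : SimpleGraph V) (hX : X.Connected) (hY : Y.Connected)
    (hreg : ∃ r, ∀ v : V, gdeg X v = r)
    (h : DegreeSimilar X Y) (H : SimpleGraph W) :
    DegreeSimilar (joinG X H) (joinG Y H) := by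
  classical
  obtain ⟨r, hr⟩ := hreg
  obtain ⟨e, M, hM, hA, hD⟩ := h
  have hne : Nonempty V := hX.nonempty
  have hMdet : IsUnit M.det := (Matrix.isUnit_iff_isUnit_det M).mp hM
  have hMl : M⁻¹ * M = 1 := Matrix.nonsing_inv_mul M hMdet
  have hMr : M * M⁻¹ = 1 := Matrix.mul_nonsing_inv M hMdet
  -- X is regular, so its degree matrix is scalar
  have hDX : degMat X = (r : ℝ) • (1 : Matrix V V ℝ) := by
    ext a b
    rcases eq_or_ne a b with rfl | hab
    · simp [degMat, hr]
    · simp [degMat, Matrix.diagonal_apply_ne _ hab, Matrix.one_apply_ne hab]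
  -- hence Y is also r-regular
  have hYreg : ∀ w, gdeg Y w = r := by
    intro w
    have h1 : (degMat Y).submatrix ⇑e ⇑e = (r : ℝ) • (1 : Matrix V V ℝ) := by
      rw [← hD, hDX, Matrix.mul_smul, Matrix.mul_one, Matrix.smul_mul, hMl]
    have h2 := congrFun (congrFun h1 (e.symm w)) (e.symm w)
    simp only [Matrix.submatrix_apply, Equiv.apply_symm_apply, Matrix.smul_apply,
      Matrix.one_apply_eq, smul_eq_mul, mul_one, degMat, Matrix.diagonal_apply_eq] at h2
    exact_mod_cast h2
  -- adjMat X * M = M * (adjMat Y).submatrix e e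
  have hAX : adjMat X * M = M * ((adjMat Y).submatrix ⇑e ⇑e) := by
    have h3 := congrArg (fun P => M * P) hA
    simpa only [← Matrix.mul_assoc, hMr, Matrix.one_mul] using h3
  set one : V → ℝ := fun _ => 1 with hone
  -- row sums
  have hrowX : ∀ a, ∑ b, adjMat X a b = (r : ℝ) := by
    intro a; rw [rowsum_adj, hr a]
  have hrowY : ∀ a, ∑ b, adjMat Y a b = (r : ℝ) := by
    intro a; rw [rowsum_adj, hYreg a]
  have hAYone : ((adjMat Y).submatrix ⇑e ⇑e).mulVec one = (r : ℝ) • one := by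
    funext a
    simp only [Matrix.mulVec, dotProduct, Matrix.submatrix_apply, hone, mul_one,
      Pi.smul_apply, smul_eq_mul]
    rw [Equiv.sum_comp e (fun b => adjMat Y (e a) b), hrowY]
  -- right eigenvector: phi = M 1 is constant
  set phi : V → ℝ := M.mulVec one with hphi
  have hphieig : (adjMat X).mulVec phi = (r : ℝ) • phi := by
    rw [hphi, Matrix.mulVec_mulVec, hAX, ← Matrix.mulVec_mulVec, hAYone,
      Matrix.mulVec_smul]
  have hphiconst := eig_const X hX r hr phi hphieig
  set v₀ : V := Classical.arbitrary V with hv₀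
  set c : ℝ := phi v₀ with hc
  have hphic : ∀ v, phi v = c := fun v => hphiconst v v₀
  -- left eigenvector: psi = 1ᵀ M is constant
  set psi : V → ℝ := Matrix.vecMul one M with hpsi
  have honeX : Matrix.vecMul one (adjMat X) = (r : ℝ) • one := by
    funext b
    simp only [Matrix.vecMul, dotProduct, hone, one_mul, Pi.smul_apply,
      smul_eq_mul, mul_one]
    calc ∑ a, adjMat X a b = ∑ a, adjMat X b a :=
          Finset.sum_congr rfl fun a _ => adjMat_symmetric X a b
      _ = (r : ℝ) := hrowX b
  have hpsieig : Matrix.vecMul psi ((adjMat Y).submatrix ⇑e ⇑e) = (r : ℝ) • psi := by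
    rw [hpsi, Matrix.vecMul_vecMul, ← hAX, ← Matrix.vecMul_vecMul, honeX,
      Matrix.smul_vecMul]
  set g : V → ℝ := fun w => psi (e.symm w) with hg
  have hgeig : (adjMat Y).mulVec g = (r : ℝ) • g := by
    funext w
    have h4 := congrFun hpsieig (e.symm w)
    simp only [Matrix.vecMul, dotProduct, Matrix.submatrix_apply,
      Equiv.apply_symm_apply, Pi.smul_apply, smul_eq_mul] at h4
    simp only [Matrix.mulVec, dotProduct, hg, Pi.smul_apply, smul_eq_mul]
    rw [← Equiv.sum_comp e (fun b => adjMat Y w b * psi (e.symm b))]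
    calc ∑ a, adjMat Y w (e a) * psi (e.symm (e a))
        = ∑ a, psi a * adjMat Y (e a) w := by
          refine Finset.sum_congr rfl fun a _ => ?_
          rw [Equiv.symm_apply_apply, adjMat_symmetric, mul_comm]
      _ = (r : ℝ) * psi (e.symm w) := h4
  have hgconst := eig_const Y hY r hYreg g hgeig
  have hpsiconst : ∀ v, psi v = psi v₀ := by
    intro v
    have := hgconst (e v) (e v₀)
    simpa only [hg, Equiv.symm_apply_apply] using this
  -- the two constants agree
  have hsum : ∑ v, phi v = ∑ v, psi v := by
    simp only [hphi, hpsi, Matrix.mulVec, Matrix.vecMul, dotProduct, hone,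
      mul_one, one_mul]
    exact Finset.sum_comm
  have hpsic : ∀ v, psi v = c := by
    have hcard : (0 : ℝ) < (Fintype.card V : ℝ) := by
      exact_mod_cast Fintype.card_pos
    intro v
    rw [hpsiconst v]
    have h5 : (Fintype.card V : ℝ) * c = (Fintype.card V : ℝ) * psi v₀ := by
      calc (Fintype.card V : ℝ) * c = ∑ _v : V, c := by
            rw [Finset.sum_const, nsmul_eq_mul, Finset.card_univ]
        _ = ∑ v, phi v := by exact Finset.sum_congr rfl fun v _ => (hphic v).symm
        _ = ∑ v, psi v := hsum
        _ = ∑ _v : V, psi v₀ := Finset.sum_congr rfl fun v _ => hpsiconst v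
        _ = (Fintype.card V : ℝ) * psi v₀ := by
            rw [Finset.sum_const, nsmul_eq_mul, Finset.card_univ]
    exact (mul_left_cancel₀ (ne_of_gt hcard) h5).symm
  -- c is nonzero
  have hcne : c ≠ 0 := by
    intro hc0
    have h6 : M.mulVec one = 0 := by
      funext v
      have := hphic v
      rw [hc0] at this
      exact this
    have h7 : one = 0 := by
      have h8 : (M⁻¹ * M).mulVec one = M⁻¹.mulVec (M.mulVec one) :=
        (Matrix.mulVec_mulVec _ _ _).symm
      rw [hMl, Matrix.one_mulVec, h6, Matrix.mulVec_zero] at h8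
      exact h8
    have := congrFun h7 v₀
    simp [hone] at this
  -- all-ones blocks
  set Jvw : Matrix V W ℝ := Matrix.of fun _ _ => 1 with hJvw
  set Jwv : Matrix W V ℝ := Matrix.of fun _ _ => 1 with hJwv
  have hMJ : M * Jvw = c • Jvw := by
    ext a b
    simp only [Matrix.mul_apply, hJvw, Matrix.of_apply, mul_one, Matrix.smul_apply,
      smul_eq_mul]
    have := hphic a
    simpa [hphi, Matrix.mulVec, dotProduct, hone] using this
  have hJM : Jwv * M = c • Jwv := by
    ext a b
    simp only [Matrix.mul_apply, hJwv, Matrix.of_apply, one_mul, Matrix.smul_apply,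
      smul_eq_mul]
    have := hpsic b
    simpa [hpsi, Matrix.vecMul, dotProduct, hone] using this
  have hMinvJ : M⁻¹ * Jvw = c⁻¹ • Jvw := by
    have h9 := congrArg (fun P => M⁻¹ * P) hMJ
    simp only [← Matrix.mul_assoc, hMl, Matrix.one_mul, Matrix.mul_smul] at h9
    calc M⁻¹ * Jvw = c⁻¹ • (c • (M⁻¹ * Jvw)) := by
          rw [smul_smul, inv_mul_cancel₀ hcne, one_smul]
      _ = c⁻¹ • Jvw := by rw [← h9]
  -- the conjugating block matrix
  set N : Matrix (V ⊕ W) (V ⊕ W) ℝ :=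
    Matrix.fromBlocks M 0 0 (c • (1 : Matrix W W ℝ)) with hN
  set N' : Matrix (V ⊕ W) (V ⊕ W) ℝ :=
    Matrix.fromBlocks M⁻¹ 0 0 (c⁻¹ • (1 : Matrix W W ℝ)) with hN'
  have hscal : (c • (1 : Matrix W W ℝ)) * (c⁻¹ • 1) = 1 := by
    rw [Matrix.smul_mul, Matrix.mul_smul, Matrix.one_mul, smul_smul,
      mul_inv_cancel₀ hcne, one_smul]
  have hscal' : (c⁻¹ • (1 : Matrix W W ℝ)) * (c • 1) = 1 := by
    rw [Matrix.smul_mul, Matrix.mul_smul, Matrix.one_mul, smul_smul,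
      inv_mul_cancel₀ hcne, one_smul]
  have hNN' : N * N' = 1 := by
    rw [hN, hN', Matrix.fromBlocks_multiply]
    simp only [Matrix.mul_zero, Matrix.zero_mul, add_zero, zero_add, hMr, hscal]
    exact Matrix.fromBlocks_one
  have hN'N : N' * N = 1 := by
    rw [hN, hN', Matrix.fromBlocks_multiply]
    simp only [Matrix.mul_zero, Matrix.zero_mul, add_zero, zero_add, hMl, hscal']
    exact Matrix.fromBlocks_one
  have hNunit : IsUnit N := ⟨⟨N, N', hNN', hN'N⟩, rfl⟩
  have hNinv : N⁻¹ = N' := Matrix.inv_eq_right_inv hNN'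
  have hcoe : ⇑(e.sumCongr (Equiv.refl W)) = Sum.map ⇑e id := by
    funext x; cases x <;> rfl
  refine ⟨e.sumCongr (Equiv.refl W), N, hNunit, ?_, ?_⟩
  · -- adjacency matrices
    have hTR : M⁻¹ * Jvw * (c • (1 : Matrix W W ℝ)) = Jvw := by
      rw [Matrix.mul_smul, Matrix.mul_one, hMinvJ, smul_smul,
        mul_inv_cancel₀ hcne, one_smul]
    have hBL : c⁻¹ • (1 : Matrix W W ℝ) * Jwv * M = Jwv := by
      rw [Matrix.smul_mul, Matrix.one_mul, Matrix.smul_mul, hJM, smul_smul,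
        inv_mul_cancel₀ hcne, one_smul]
    have hBR : c⁻¹ • (1 : Matrix W W ℝ) * adjMat H * (c • 1) = adjMat H := by
      rw [Matrix.smul_mul, Matrix.one_mul, Matrix.smul_mul, Matrix.mul_smul,
        Matrix.mul_one, smul_smul, inv_mul_cancel₀ hcne, one_smul]
    rw [hNinv, hN', adjMat_join, adjMat_join, hcoe, fromBlocks_submatrix_summap,
      Matrix.fromBlocks_multiply, Matrix.fromBlocks_multiply]
    simp only [Matrix.mul_zero, Matrix.zero_mul, add_zero, zero_add]
    rw [← hJvw, ← hJwv, hA, hTR, hBL, hBR]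
    rfl
  · -- degree matrices
    have hDYsub : (degMat Y + (Fintype.card W : ℝ) • 1).submatrix ⇑e ⇑e =
        (degMat Y).submatrix ⇑e ⇑e + (Fintype.card W : ℝ) • 1 := by
      ext a b
      simp [Matrix.one_apply, EmbeddingLike.apply_eq_iff_eq]
    have hTL2 : M⁻¹ * (degMat X + (Fintype.card W : ℝ) • 1) * M =
        (degMat Y).submatrix ⇑e ⇑e + (Fintype.card W : ℝ) • 1 := by
      have h10 : M⁻¹ * (degMat X + (Fintype.card W : ℝ) • 1) * M =
          M⁻¹ * degMat X * M + (Fintype.card W : ℝ) • (M⁻¹ * M) := by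
        rw [Matrix.mul_add, Matrix.add_mul, Matrix.mul_smul, Matrix.mul_one,
          Matrix.smul_mul]
      rw [h10, hMl, hD]
    have hBR2 : c⁻¹ • (1 : Matrix W W ℝ) * (degMat H + (Fintype.card V : ℝ) • 1) *
        (c • 1) = degMat H + (Fintype.card V : ℝ) • 1 := by
      rw [Matrix.smul_mul, Matrix.one_mul, Matrix.smul_mul, Matrix.mul_smul,
        Matrix.mul_one, smul_smul, inv_mul_cancel₀ hcne, one_smul]
    rw [hNinv, hN', degMat_join, degMat_join, hcoe, fromBlocks_submatrix_summap,
      Matrix.fromBlocks_multiply, Matrix.fromBlocks_multiply]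
    simp only [Matrix.mul_zero, Matrix.zero_mul, add_zero, zero_add]
    rw [hTL2, hBR2, hDYsub]
    rfl
end
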